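/- Let f : ℂ → ℂ be an entire function with Taylor coefficients c_n, let Q : ℕ → ℝ satisfy |c_n| ≤ exp(−Q(n)) for all n ∈ ℕ, and suppose there exists ε₀ ∈ (0,1) such that K(ε₀) := Σ_{n=0}^∞ exp(−ε₀·Q(n)) < ∞. Then for every r ≥ 1 such that Q^∗((log r)/(1−ε₀)) < ∞, where Q^∗(u) := sup_{n ∈ ℕ} (n·u − Q(n)), one has M_f(r) ≤ K(ε₀) · exp((1−ε₀) · Q^∗((log r)/(1−ε₀))). -/

import Mathlib

/-- Proposition 2.3: if `f` is entire with Taylor coefficients `c` satisfying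
`|c_n| ≤ exp(-Q(n))`, and `K(ε₀) = Σ_n exp(-ε₀·Q(n)) < ∞` for some `ε₀ ∈ (0,1)`,
then for every `r ≥ 1` for which the discrete conjugate
`Q*((log r)/(1-ε₀)) = sup_n (n·(log r)/(1-ε₀) - Q(n))` is finite, the maximal
function satisfies `M_f(r) ≤ K(ε₀) · exp((1-ε₀)·Q*((log r)/(1-ε₀)))`. -/
theorem maximal_function_upper_estimate
    (f : ℂ → ℂ) (c : ℕ → ℂ)
    (hf : ∀ z : ℂ, HasSum (fun n : ℕ => c n * z ^ n) (f z))
    (Q : ℕ → ℝ)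
    (hc : ∀ n : ℕ, ‖c n‖ ≤ Real.exp (-Q n))
    (ε₀ : ℝ) (hε₀ : ε₀ ∈ Set.Ioo (0 : ℝ) 1)
    (hK : Summable fun n : ℕ => Real.exp (-ε₀ * Q n)) :
    ∀ r : ℝ, 1 ≤ r →
      BddAbove (Set.range fun n : ℕ => (n : ℝ) * (Real.log r / (1 - ε₀)) - Q n) →
      sSup {x : ℝ | ∃ z : ℂ, ‖z‖ = r ∧ x = ‖f z‖}
        ≤ (∑' n : ℕ, Real.exp (-ε₀ * Q n)) *
          Real.exp ((1 - ε₀) *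
            sSup (Set.range fun n : ℕ => (n : ℝ) * (Real.log r / (1 - ε₀)) - Q n)) := by
  intro r hr hbdd
  obtain ⟨hε0, hε1⟩ := hε₀
  have h1ε : (0:ℝ) < 1 - ε₀ := by linarith
  have hr0 : (0:ℝ) < r := by linarith
  set S : ℝ := sSup (Set.range fun n : ℕ => (n : ℝ) * (Real.log r / (1 - ε₀)) - Q n) with hS
  -- termwise bound
  have key : ∀ n : ℕ, Real.exp (-Q n) * r ^ n
      ≤ Real.exp (-ε₀ * Q n) * Real.exp ((1 - ε₀) * S) := by
    intro n
    have hle : (n : ℝ) * (Real.log r / (1 - ε₀)) - Q n ≤ S :=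
      le_csSup hbdd ⟨n, rfl⟩
    have hrpow : r ^ n = Real.exp ((n : ℝ) * Real.log r) := by
      rw [← Real.rpow_natCast r n, Real.rpow_def_of_pos hr0, mul_comm]
    rw [hrpow, ← Real.exp_add, ← Real.exp_add]
    apply Real.exp_le_exp.2
    have h2 : (1 - ε₀) * ((n : ℝ) * (Real.log r / (1 - ε₀)) - Q n) ≤ (1 - ε₀) * S :=
      mul_le_mul_of_nonneg_left hle (le_of_lt h1ε)
    have h3 : (1 - ε₀) * ((n : ℝ) * (Real.log r / (1 - ε₀)) - Q n)
        = (n : ℝ) * Real.log r - (1 - ε₀) * Q n := by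
      field_simp
    nlinarith [h2, h3]
  have hKsum : Summable (fun n : ℕ => Real.exp (-ε₀ * Q n) * Real.exp ((1 - ε₀) * S)) :=
    hK.mul_right _
  apply Real.sSup_le
  · rintro x ⟨z, hz, rfl⟩
    have hsum : Summable (fun n : ℕ => ‖c n * z ^ n‖) := by
      apply Summable.of_nonneg_of_le (fun n => norm_nonneg _) _ hKsum
      intro n
      calc ‖c n * z ^ n‖ = ‖c n‖ * r ^ n := by
            rw [norm_mul, norm_pow, hz]
        _ ≤ Real.exp (-Q n) * r ^ n := by
            apply mul_le_mul_of_nonneg_right (hc n) (pow_nonneg (le_of_lt hr0) n)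
        _ ≤ _ := key n
    have habs : ‖f z‖ ≤ ∑' n : ℕ, ‖c n * z ^ n‖ := by
      have := norm_tsum_le_tsum_norm (f := fun n : ℕ => c n * z ^ n)
        (by simpa using hsum)
      rw [← (hf z).tsum_eq]
      simpa using this
    calc ‖f z‖ ≤ ∑' n : ℕ, ‖c n * z ^ n‖ := habs
      _ ≤ ∑' n : ℕ, Real.exp (-ε₀ * Q n) * Real.exp ((1 - ε₀) * S) := by
          apply Summable.tsum_le_tsum _ hsum hKsum
          intro n
          calc ‖c n * z ^ n‖ = ‖c n‖ * r ^ n := by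
                rw [norm_mul, norm_pow, hz]
            _ ≤ Real.exp (-Q n) * r ^ n :=
                mul_le_mul_of_nonneg_right (hc n) (pow_nonneg (le_of_lt hr0) n)
            _ ≤ _ := key n
      _ = (∑' n : ℕ, Real.exp (-ε₀ * Q n)) * Real.exp ((1 - ε₀) * S) :=
          tsum_mul_right
  · exact mul_nonneg (tsum_nonneg fun n => (Real.exp_pos _).le) (Real.exp_pos _).le
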